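/- arXiv:math/0204300 — 3 statements merged into one kernel-verified Lean document; each statement's English description precedes it below -/
import Mathlib

section
/- Let L : Λ → ℂ be a hermitian linear functional and let (f_n)_{n≥0} be a sequence of right orthogonal Laurent polynomials with respect to L, with ℓ_n := (f_n, f_n)_L. Then there exist complex numbers π_{n,k}, defined for n, k ≥ 0 with |n − k| ≤ 2, such that for every n ≥ 0 (with the convention f_k = 0 and f_{k*} = 0 for k < 0): z·f_n(z) = Σ_{k=n−2}^{n+2} π_{n,k} f_k(z) and z·f_{n*}(z) = Σ_{k=n−2}^{n+2} (ℓ_n/ℓ_k) π_{k,n} f_{k*}(z) (sums over those k ≥ 0), i.e. the right and left orthogonal Laurent polynomials satisfy a five-term recurrence relation. -/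
open LaurentPolynomial Polynomial Complex ComplexConjugate

noncomputable section

/-- Substar conjugate of a Laurent polynomial: f_*(z) = Σ conj(c_k) z^{-k}. -/
def substar (f : LaurentPolynomial ℂ) : LaurentPolynomial ℂ :=
  AddMonoidAlgebra.ofCoeff
    (Finsupp.mapRange (starRingEnd ℂ) (map_zero _) (LaurentPolynomial.invert f).coeff)

/-- Hermitian linear functional on Laurent polynomials. -/
def IsHermitianL (L : LaurentPolynomial ℂ →ₗ[ℂ] ℂ) : Prop :=
  ∀ n : ℕ, L (T (-(n : ℤ))) = conj (L (T (n : ℤ)))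

/-- The sesquilinear form induced by `L`: (f,g)_L := L (f g_*). -/
def sesq (L : LaurentPolynomial ℂ →ₗ[ℂ] ℂ) (f g : LaurentPolynomial ℂ) : ℂ :=
  L (f * substar g)

/-- Λ_{m,n} = span {z^m, …, z^n}. -/
def lamBox (m n : ℤ) : Submodule ℂ (LaurentPolynomial ℂ) :=
  Submodule.span ℂ ((fun k : ℤ => (T k : LaurentPolynomial ℂ)) '' Set.Icc m n)

/-- Λ_n^+  (Λ_{2n}^+ = Λ_{-n,n}, Λ_{2n+1}^+ = Λ_{-n,n+1}). -/
def lamPlus (n : ℕ) : Submodule ℂ (LaurentPolynomial ℂ) :=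
  lamBox (-((n / 2 : ℕ) : ℤ)) (((n + 1) / 2 : ℕ) : ℤ)

/-- Λ_n^-  (Λ_{2n}^- = Λ_{-n,n}, Λ_{2n+1}^- = Λ_{-n-1,n}). -/
def lamMinus (n : ℕ) : Submodule ℂ (LaurentPolynomial ℂ) :=
  lamBox (-(((n + 1) / 2 : ℕ) : ℤ)) ((n / 2 : ℕ) : ℤ)

/-- (f_n) is a sequence of right orthogonal Laurent polynomials w.r.t. L. -/
def IsRightOLP (L : LaurentPolynomial ℂ →ₗ[ℂ] ℂ) (f : ℕ → LaurentPolynomial ℂ) : Prop :=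
  (∀ n, f n ∈ lamPlus n) ∧ f 0 ≠ 0 ∧ (∀ n, f (n + 1) ∉ lamPlus n) ∧
    (∀ n m, n ≠ m → sesq L (f n) (f m) = 0) ∧ (∀ n, sesq L (f n) (f n) ≠ 0)

/-- (f_n) is a sequence of left orthogonal Laurent polynomials w.r.t. L. -/
def IsLeftOLP (L : LaurentPolynomial ℂ →ₗ[ℂ] ℂ) (f : ℕ → LaurentPolynomial ℂ) : Prop :=
  (∀ n, f n ∈ lamMinus n) ∧ f 0 ≠ 0 ∧ (∀ n, f (n + 1) ∉ lamMinus n) ∧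
    (∀ n m, n ≠ m → sesq L (f n) (f m) = 0) ∧ (∀ n, sesq L (f n) (f n) ≠ 0)

/-- Right orthonormal Laurent polynomials. -/
def IsRightOnLP (L : LaurentPolynomial ℂ →ₗ[ℂ] ℂ) (f : ℕ → LaurentPolynomial ℂ) : Prop :=
  IsRightOLP L f ∧ ∀ n, sesq L (f n) (f n) = 1 ∨ sesq L (f n) (f n) = -1

/-- Left orthonormal Laurent polynomials. -/
def IsLeftOnLP (L : LaurentPolynomial ℂ →ₗ[ℂ] ℂ) (f : ℕ → LaurentPolynomial ℂ) : Prop :=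
  IsLeftOLP L f ∧ ∀ n, sesq L (f n) (f n) = 1 ∨ sesq L (f n) (f n) = -1

/-! ### Auxiliary lemmas on `substar` -/

lemma substar_apply (f : LaurentPolynomial ℂ) (k : ℤ) : (substar f).coeff k = conj (f.coeff (-k)) := by
  simp [substar]
lemma LP.add_apply (p q : LaurentPolynomial ℂ) (k : ℤ) : (p + q).coeff k = p.coeff k + q.coeff k := rfl
lemma LP.smul_apply (c : ℂ) (p : LaurentPolynomial ℂ) (k : ℤ) : (c • p).coeff k = c * p.coeff k := rfl

lemma lp_ext {p q : LaurentPolynomial ℂ} (h : ∀ k, p.coeff k = q.coeff k) : p = q :=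
  AddMonoidAlgebra.coeff_injective (Finsupp.ext h)

lemma substar_add (p q : LaurentPolynomial ℂ) : substar (p + q) = substar p + substar q :=
  lp_ext fun k => by simp [substar_apply, LP.add_apply]

lemma substar_smul (c : ℂ) (p : LaurentPolynomial ℂ) : substar (c • p) = conj c • substar p :=
  lp_ext fun k => by simp [substar_apply, LP.smul_apply]

lemma substar_single (a : ℤ) (r : ℂ) :
    substar (AddMonoidAlgebra.single a r : LaurentPolynomial ℂ) = AddMonoidAlgebra.single (-a) (conj r) :=
  lp_ext fun k => by
    rw [substar_apply]
    simp only [AddMonoidAlgebra.coeff_single, Finsupp.single_apply]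
    split_ifs with h1 h2 h2
    · rfl
    · omega
    · omega
    · simp

lemma substar_T (a : ℤ) : substar (T a) = T (-a) := by
  rw [T, T, substar_single, map_one]

lemma substar_substar (p : LaurentPolynomial ℂ) : substar (substar p) = p :=
  lp_ext fun k => by simp [substar_apply]

lemma substar_zero : substar 0 = 0 := lp_ext fun k => by simp [substar_apply]

lemma single_eq_smul_T (a : ℤ) (r : ℂ) :
    (AddMonoidAlgebra.single a r : LaurentPolynomial ℂ) = r • T a :=
  lp_ext fun k => by
    rw [LP.smul_apply, T]
    simp only [AddMonoidAlgebra.coeff_single, Finsupp.single_apply]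
    split_ifs <;> simp

lemma substar_mul (p q : LaurentPolynomial ℂ) : substar (p * q) = substar p * substar q := by
  induction p using AddMonoidAlgebra.induction_linear with
  | zero => simp [substar_zero]
  | add a b ha hb => rw [add_mul, substar_add, substar_add, ha, hb, add_mul]
  | single a r =>
    induction q using AddMonoidAlgebra.induction_linear with
    | zero => simp [substar_zero]
    | add a' b' ha hb => rw [mul_add, substar_add, substar_add, ha, hb, mul_add]
    | single b s =>
      rw [single_eq_smul_T a r, single_eq_smul_T b s]
      have hL : substar ((r • T a) * (s • T b)) = conj (r * s) • T (-(a + b)) := by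
        rw [smul_mul_assoc, mul_smul_comm, ← mul_smul, ← T_add, substar_smul, substar_T]
      have hR : ((conj r • T (-a) : LaurentPolynomial ℂ)) * (conj s • T (-b))
          = conj (r * s) • T (-(a + b)) := by
        rw [smul_mul_assoc, mul_smul_comm, ← mul_smul, ← T_add, map_mul, neg_add]
      rw [hL, substar_smul, substar_smul, substar_T, substar_T, hR]

def substarAddHom : LaurentPolynomial ℂ →+ LaurentPolynomial ℂ :=
  { toFun := substar, map_zero' := substar_zero, map_add' := substar_add }

lemma substar_sum {ι : Type*} (s : Finset ι) (g : ι → LaurentPolynomial ℂ) :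
    substar (∑ i ∈ s, g i) = ∑ i ∈ s, substar (g i) :=
  map_sum substarAddHom g s

/-! ### Auxiliary lemmas on `sesq` -/

variable {L : LaurentPolynomial ℂ →ₗ[ℂ] ℂ}

lemma hermitian_T (hL : IsHermitianL L) (a : ℤ) : L (T (-a)) = conj (L (T a)) := by
  rcases le_or_gt 0 a with h | h
  · lift a to ℕ using h; exact hL a
  · obtain ⟨n, rfl⟩ : ∃ n : ℕ, a = -(n : ℤ) := ⟨a.natAbs, by omega⟩
    rw [neg_neg, hL n, Complex.conj_conj]

lemma L_substar (hL : IsHermitianL L) (p : LaurentPolynomial ℂ) :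
    L (substar p) = conj (L p) := by
  induction p using AddMonoidAlgebra.induction_linear with
  | zero => simp [substar_zero]
  | add a b ha hb => rw [substar_add, map_add, map_add, ha, hb, map_add]
  | single a r =>
    rw [substar_single, single_eq_smul_T, single_eq_smul_T, map_smul, map_smul,
      hermitian_T hL a, smul_eq_mul, smul_eq_mul, map_mul]

lemma sesq_conj (hL : IsHermitianL L) (p q : LaurentPolynomial ℂ) :
    conj (sesq L p q) = sesq L q p := by
  rw [sesq, sesq, ← L_substar hL, substar_mul, substar_substar, mul_comm]

lemma sesq_self_real (hL : IsHermitianL L) (p : LaurentPolynomial ℂ) :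
    conj (sesq L p p) = sesq L p p := sesq_conj hL p p

lemma sesq_zero_left (q : LaurentPolynomial ℂ) : sesq L 0 q = 0 := by
  rw [sesq, zero_mul, map_zero]
lemma sesq_smul_left (c : ℂ) (p q) : sesq L (c • p) q = c * sesq L p q := by
  rw [sesq, sesq, smul_mul_assoc, map_smul, smul_eq_mul]
lemma sesq_smul_right (c : ℂ) (p q) : sesq L p (c • q) = conj c * sesq L p q := by
  rw [sesq, sesq, substar_smul, mul_smul_comm, map_smul, smul_eq_mul]
lemma sesq_sum_left {ι : Type*} (s : Finset ι) (g : ι → LaurentPolynomial ℂ) (q) :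
    sesq L (∑ i ∈ s, g i) q = ∑ i ∈ s, sesq L (g i) q := by
  rw [sesq, Finset.sum_mul, map_sum]; rfl
lemma sesq_sum_right {ι : Type*} (s : Finset ι) (p) (g : ι → LaurentPolynomial ℂ) :
    sesq L p (∑ i ∈ s, g i) = ∑ i ∈ s, sesq L p (g i) := by
  rw [sesq, substar_sum, Finset.mul_sum, map_sum]; rfl
lemma sesq_T_shift (c : ℤ) (p q : LaurentPolynomial ℂ) :
    sesq L (T c * p) q = sesq L p (T (-c) * q) := by
  rw [sesq, sesq, substar_mul, substar_T, neg_neg]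
  ring_nf

/-! ### Dimension lemmas -/

lemma linearIndependent_T : LinearIndependent ℂ (fun k : ℤ => (T k : LaurentPolynomial ℂ)) :=
  (Finsupp.basisSingleOne.map (AddMonoidAlgebra.coeffLinearEquiv ℂ).symm).linearIndependent

instance lamBox.finiteDimensional (m n : ℤ) : FiniteDimensional ℂ (lamBox m n) :=
  FiniteDimensional.span_of_finite ℂ ((Set.finite_Icc m n).image _)

instance lamPlus.finiteDimensional (n : ℕ) : FiniteDimensional ℂ (lamPlus n) :=
  lamBox.finiteDimensional _ _

lemma finrank_lamBox (m n : ℤ) (h : m ≤ n) :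
    Module.finrank ℂ (lamBox m n) = (n - m + 1).toNat := by
  have hli : LinearIndependent ℂ (fun k : Set.Icc m n => (T (k : ℤ) : LaurentPolynomial ℂ)) :=
    linearIndependent_T.comp _ Subtype.coe_injective
  have : lamBox m n
      = Submodule.span ℂ (Set.range fun k : Set.Icc m n => (T (k:ℤ) : LaurentPolynomial ℂ)) := by
    rw [lamBox]; congr 1; rw [← Set.image_eq_range]
  rw [this, finrank_span_eq_card hli, ← Nat.card_eq_fintype_card]
  rw [← Finset.coe_Icc, Nat.card_coe_set_eq, Set.ncard_coe_finset, Int.card_Icc]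
  omega

lemma lamBox_mono {m n m' n' : ℤ} (hm : m ≤ m') (hn : n' ≤ n) : lamBox m' n' ≤ lamBox m n :=
  Submodule.span_mono (Set.image_mono (Set.Icc_subset_Icc hm hn))

lemma lamPlus_mono {a b : ℕ} (h : a ≤ b) : lamPlus a ≤ lamPlus b := by
  apply lamBox_mono <;> omega

lemma finrank_lamPlus (n : ℕ) : Module.finrank ℂ (lamPlus n) = n + 1 := by
  rw [lamPlus, finrank_lamBox _ _ (by omega)]
  omega

lemma T_mul_mem_lamBox {m n : ℤ} (a : ℤ) {g : LaurentPolynomial ℂ} (hg : g ∈ lamBox m n) :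
    T a * g ∈ lamBox (m + a) (n + a) := by
  induction hg using Submodule.span_induction with
  | mem x hx =>
    obtain ⟨k, hk, rfl⟩ := hx
    rw [← T_add]
    refine Submodule.subset_span ⟨k + a, ?_, by rw [add_comm]⟩
    simp only [Set.mem_Icc] at hk ⊢
    omega
  | zero => rw [mul_zero]; exact Submodule.zero_mem _
  | add x y _ _ hx hy => rw [mul_add]; exact Submodule.add_mem _ hx hy
  | smul c x _ hx => rw [mul_smul_comm]; exact Submodule.smul_mem _ _ hx

lemma T_mul_mem_lamPlus {n : ℕ} {c : ℤ} (hc : c = 1 ∨ c = -1) {g : LaurentPolynomial ℂ}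
    (hg : g ∈ lamPlus n) : T c * g ∈ lamPlus (n + 2) := by
  have h := T_mul_mem_lamBox c hg
  refine lamBox_mono ?_ ?_ h <;> rcases hc with rfl | rfl <;> omega

/-! ### Orthogonal family lemmas -/

variable {f : ℕ → LaurentPolynomial ℂ}

lemma f_linearIndependent (hf : IsRightOLP L f) (N : ℕ) :
    LinearIndependent ℂ (fun i : Fin (N + 1) => f i) := by
  rw [Fintype.linearIndependent_iff]
  intro g hg j
  have h0 : sesq L (∑ i, g i • f i) (f j) = 0 := by rw [hg, sesq_zero_left]
  rw [sesq_sum_left] at h0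
  simp only [sesq_smul_left] at h0
  rw [Finset.sum_eq_single j] at h0
  · rcases mul_eq_zero.mp h0 with h | h
    · exact h
    · exact absurd h (hf.2.2.2.2 j)
  · intro i _ hij
    rw [hf.2.2.2.1 i j (fun h => hij (Fin.ext h)), mul_zero]
  · intro h; exact absurd (Finset.mem_univ j) h

lemma span_f (hf : IsRightOLP L f) (N : ℕ) :
    Submodule.span ℂ (Set.range fun i : Fin (N + 1) => f i) = lamPlus N := by
  have hle : Submodule.span ℂ (Set.range fun i : Fin (N + 1) => f i) ≤ lamPlus N := by
    rw [Submodule.span_le]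
    rintro x ⟨i, rfl⟩
    exact lamPlus_mono (by omega) (hf.1 i)
  refine Submodule.eq_of_le_of_finrank_le hle ?_
  rw [finrank_lamPlus, finrank_span_eq_card (f_linearIndependent hf N), Fintype.card_fin]

lemma expand (hf : IsRightOLP L f) {g : LaurentPolynomial ℂ} {N : ℕ} (hg : g ∈ lamPlus N) :
    g = ∑ k ∈ Finset.range (N + 1),
      (sesq L g (f k) / sesq L (f k) (f k)) • f k := by
  rw [← span_f hf N] at hg
  obtain ⟨c, hc⟩ := (Submodule.mem_span_range_iff_exists_fun ℂ).mp hg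
  have hcoef : ∀ j : Fin (N + 1), c j = sesq L g (f j) / sesq L (f j) (f j) := by
    intro j
    have : sesq L g (f j) = c j * sesq L (f j) (f j) := by
      rw [← hc, sesq_sum_left]
      simp only [sesq_smul_left]
      rw [Finset.sum_eq_single j]
      · intro i _ hij
        rw [hf.2.2.2.1 i j (fun h => hij (Fin.ext h)), mul_zero]
      · intro h; exact absurd (Finset.mem_univ j) h
    rw [this, mul_div_assoc, div_self (hf.2.2.2.2 j), mul_one]
  calc g = ∑ i : Fin (N + 1), c i • f i := hc.symm
    _ = ∑ i : Fin (N + 1), (sesq L g (f i) / sesq L (f i) (f i)) • f i := by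
        refine Finset.sum_congr rfl fun i _ => ?_
        rw [hcoef i]
    _ = ∑ k ∈ Finset.range (N + 1), (sesq L g (f k) / sesq L (f k) (f k)) • f k :=
        Fin.sum_univ_eq_sum_range (fun k => (sesq L g (f k) / sesq L (f k) (f k)) • f k) (N + 1)

lemma sesq_vanish (hf : IsRightOLP L f) {n m : ℕ} (h : m < n) {g : LaurentPolynomial ℂ}
    (hg : g ∈ lamPlus m) : sesq L (f n) g = 0 := by
  rw [expand hf hg, sesq_sum_right]
  refine Finset.sum_eq_zero fun k hk => ?_
  rw [sesq_smul_right, hf.2.2.2.1 n k (by simp only [Finset.mem_range] at hk; omega), mul_zero]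

/-! ### Main theorem -/

/-- Proposition 2.4: right orthogonal Laurent polynomials satisfy a
five-term recurrence relation: there are coefficients π_{n,k} (|n-k| ≤ 2) with
z f_n = Σ_{k=n-2}^{n+2} π_{n,k} f_k and
z f_{n*} = Σ_{k=n-2}^{n+2} (ℓ_n/ℓ_k) π_{k,n} f_{k*} (sums over k ≥ 0). -/
theorem fiveTerm_recurrence
    (L : LaurentPolynomial ℂ →ₗ[ℂ] ℂ) (hL : IsHermitianL L)
    (f : ℕ → LaurentPolynomial ℂ) (hf : IsRightOLP L f) :
    ∃ π : ℕ → ℕ → ℂ,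
      ∀ n : ℕ,
        T 1 * f n = ∑ k ∈ Finset.Icc (n - 2) (n + 2), π n k • f k ∧
        T 1 * substar (f n) =
          ∑ k ∈ Finset.Icc (n - 2) (n + 2),
            (sesq L (f n) (f n) / sesq L (f k) (f k) * π k n) • substar (f k) := by
  set ℓ : ℕ → ℂ := fun k => sesq L (f k) (f k) with hℓ
  refine ⟨fun n k => sesq L (T 1 * f n) (f k) / ℓ k, fun n => ?_⟩
  set π : ℕ → ℕ → ℂ := fun n k => sesq L (T 1 * f n) (f k) / ℓ k with hπ
  have hsub : Finset.Icc (n - 2) (n + 2) ⊆ Finset.range (n + 2 + 1) := by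
    intro k hk
    simp only [Finset.mem_Icc] at hk
    simp only [Finset.mem_range]
    omega
  -- numerator vanishing for small k
  have hvan1 : ∀ k : ℕ, k + 2 < n → sesq L (T 1 * f n) (f k) = 0 := by
    intro k hk
    rw [sesq_T_shift]
    exact sesq_vanish hf (show k + 2 < n from hk)
      (T_mul_mem_lamPlus (Or.inr rfl) (hf.1 k))
  have hvan2 : ∀ k : ℕ, k + 2 < n → sesq L (T (-1) * f n) (f k) = 0 := by
    intro k hk
    rw [sesq_T_shift, neg_neg]
    exact sesq_vanish hf (show k + 2 < n from hk)
      (T_mul_mem_lamPlus (Or.inl rfl) (hf.1 k))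
  constructor
  · have h1 : T 1 * f n ∈ lamPlus (n + 2) := T_mul_mem_lamPlus (Or.inl rfl) (hf.1 n)
    have hexp := expand hf h1
    rw [hexp]
    refine (Finset.sum_subset hsub ?_).symm
    intro k hk hk2
    simp only [Finset.mem_range] at hk
    simp only [Finset.mem_Icc] at hk2
    have : k + 2 < n := by omega
    rw [hvan1 k this, zero_div, zero_smul]
  · have h2 : T (-1) * f n ∈ lamPlus (n + 2) := T_mul_mem_lamPlus (Or.inr rfl) (hf.1 n)
    have hexp := expand hf h2
    have hstar : T 1 * substar (f n)
        = ∑ k ∈ Finset.range (n + 2 + 1),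
            conj (sesq L (T (-1) * f n) (f k) / ℓ k) • substar (f k) := by
      have := congrArg substar hexp
      rw [substar_mul, substar_T, neg_neg, substar_sum] at this
      rw [this]
      refine Finset.sum_congr rfl fun k _ => ?_
      rw [substar_smul]
    have hcoef : ∀ k : ℕ, conj (sesq L (T (-1) * f n) (f k) / ℓ k)
        = ℓ n / ℓ k * π k n := by
      intro k
      have hk0 : ℓ k ≠ 0 := hf.2.2.2.2 k
      have hn0 : ℓ n ≠ 0 := hf.2.2.2.2 n
      have e1 : conj (sesq L (T (-1) * f n) (f k)) = sesq L (f k) (T (-1) * f n) :=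
        sesq_conj hL _ _
      have e2 : sesq L (T 1 * f k) (f n) = sesq L (f k) (T (-1) * f n) :=
        sesq_T_shift 1 (f k) (f n)
      rw [map_div₀, e1, ← e2, sesq_self_real hL, hπ]
      simp only
      rw [hℓ]
      field_simp
      exact (mul_div_mul_right _ _ (hf.2.2.2.2 n)).symm
    rw [hstar]
    refine (Finset.sum_subset hsub ?_).symm.trans ?_
    · intro k hk hk2
      simp only [Finset.mem_range] at hk
      simp only [Finset.mem_Icc] at hk2
      have : k + 2 < n := by omega
      rw [map_div₀, hvan2 k this, map_zero, zero_div, zero_smul]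
    · refine Finset.sum_congr rfl fun k _ => ?_
      rw [hcoef k]
end
end

section
/- Fix n ≥ 2 and Schur parameters a_1, …, a_{n−1} with |a_j| ≠ 1 for 1 ≤ j ≤ n−1, and for t ∈ ℂ let φ_n^t(z) := z·φ_{n−1}(z) + t·φ*_{n−1}(z). Let U ⊆ ℂ be open and let λ : U → ℂ be holomorphic with φ_n^{t}(λ(t)) = 0 for all t ∈ U. Then for every t ∈ U: if λ(t) ≠ 0, then K_{n−1}(λ(t), conj(λ(t))^{−1}) · λ'(t) = −e_{n−1} · λ(t)^{1−n} · (φ̂*_{n−1}(λ(t)))²; and if λ(t) = 0, then a_{n−1} · λ'(t) = −1. -/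
open LaurentPolynomial Polynomial Complex ComplexConjugate

noncomputable section

/-- Reversed polynomial with conjugated coefficients: p*(z) = Σ conj(c_{m-k}) z^k. -/
def revc (p : Polynomial ℂ) : Polynomial ℂ := (p.map (starRingEnd ℂ)).reverse

/-- Monic orthogonal polynomials from Schur parameters: φ_0 = 1,
φ_n = z φ_{n-1} + a_n φ*_{n-1}. -/
def phi (a : ℕ → ℂ) : ℕ → Polynomial ℂ
  | 0 => 1
  | n + 1 => X * phi a n + Polynomial.C (a (n + 1)) * revc (phi a n)

/-- ρ_n := |1 - |a_n|²|^{1/2}. -/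
def rho (a : ℕ → ℂ) (n : ℕ) : ℝ := Real.sqrt |1 - ‖a n‖ ^ 2|

/-- ε_n := sgn (1 - |a_n|²). -/
def sgn (a : ℕ → ℂ) (n : ℕ) : ℝ := Real.sign (1 - ‖a n‖ ^ 2)

/-- ρ̂_n := ε_n ρ_n. -/
def rhoh (a : ℕ → ℂ) (n : ℕ) : ℝ := sgn a n * rho a n

/-- κ_n := Π_{k=1}^n ρ_k⁻¹ (κ_0 = 1). -/
def kap (a : ℕ → ℂ) (n : ℕ) : ℝ := ∏ k ∈ Finset.Icc 1 n, (rho a k)⁻¹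

/-- e_n := Π_{k=1}^n ε_k (e_0 = 1). -/
def esgn (a : ℕ → ℂ) (n : ℕ) : ℝ := ∏ k ∈ Finset.Icc 1 n, sgn a k

/-- Orthonormal polynomials φ̂_n := κ_n φ_n. -/
def phin (a : ℕ → ℂ) (n : ℕ) : Polynomial ℂ := Polynomial.C ((kap a n : ℝ) : ℂ) * phi a n

/-- Standard right orthonormal Laurent polynomials:
χ_{2m} = z^{-m} φ̂*_{2m}, χ_{2m+1} = z^{-m} φ̂_{2m+1}. -/
def chi (a : ℕ → ℂ) (n : ℕ) : LaurentPolynomial ℂ :=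
  T (-((n / 2 : ℕ) : ℤ)) * (if Even n then revc (phin a n) else phin a n).toLaurent

/-- The kernel K_n(z,y) := Σ_{k=0}^n e_k φ̂_k(z) conj(φ̂_k(y)). -/
def Kker (a : ℕ → ℂ) (n : ℕ) (z y : ℂ) : ℂ :=
  ∑ k ∈ Finset.range (n + 1),
    ((esgn a k : ℝ) : ℂ) * (phin a k).eval z * conj ((phin a k).eval y)

/-- Entries of the five-diagonal matrix, with rows/columns indexed from 1. -/
def Fent (a : ℕ → ℂ) (i j : ℕ) : ℂ :=
  if i = 1 then
    if j = 1 then -a 1 else if j = 2 then (rho a 1 : ℂ) else 0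
  else if i % 2 = 0 then
    if j + 1 = i then -(rhoh a (i - 1) : ℂ) * a i
    else if j = i then -conj (a (i - 1)) * a i
    else if j = i + 1 then -(rho a i : ℂ) * a (i + 1)
    else if j = i + 2 then (rho a i : ℂ) * (rho a (i + 1) : ℂ)
    else 0
  else
    if j + 2 = i then (rhoh a (i - 2) : ℂ) * (rhoh a (i - 1) : ℂ)
    else if j + 1 = i then conj (a (i - 2)) * (rhoh a (i - 1) : ℂ)
    else if j = i then -conj (a (i - 1)) * a i
    else if j = i + 1 then conj (a (i - 1)) * (rho a i : ℂ)
    else 0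

/-- The n×n five-diagonal matrix ℱ_n. -/
def Fmat (a : ℕ → ℂ) (n : ℕ) : Matrix (Fin n) (Fin n) ℂ :=
  Matrix.of fun i j => Fent a (i.val + 1) (j.val + 1)

/-- Evaluation of a Laurent polynomial at a nonzero complex number. -/
def levalAt (z : ℂ) (f : LaurentPolynomial ℂ) : ℂ :=
  Finsupp.sum f.coeff fun k c => c * z ^ k

lemma phi_aux (a : ℕ → ℂ) : ∀ m, (phi a m).Monic ∧ (phi a m).natDegree = m := by
  intro m
  induction m with
  | zero => exact ⟨monic_one, natDegree_one⟩
  | succ k ih =>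
    obtain ⟨hm, hd⟩ := ih
    have hbig : (X * phi a k).Monic := monic_X.mul hm
    have hbigd : (X * phi a k).natDegree = k + 1 := by
      rw [monic_X.natDegree_mul hm, hd, natDegree_X]; omega
    have hsmall : (Polynomial.C (a (k+1)) * revc (phi a k)).degree < (X * phi a k).degree := by
      have h1 : (revc (phi a k)).natDegree ≤ k :=
        le_trans (reverse_natDegree_le _) (le_trans (natDegree_map_le) hd.le)
      have h2 : (Polynomial.C (a (k+1)) * revc (phi a k)).degree ≤ (k : WithBot ℕ) := by
        refine le_trans (degree_mul_le _ _) ?_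
        refine le_trans (add_le_add degree_C_le degree_le_natDegree) ?_
        simpa using h1
      have h3 : (X * phi a k).degree = ((k+1 : ℕ) : WithBot ℕ) := by
        rw [degree_eq_natDegree hbig.ne_zero, hbigd]
      rw [h3]
      exact lt_of_le_of_lt h2 (by exact_mod_cast Nat.lt_succ_self k)
    constructor
    · exact hbig.add_of_left hsmall
    · rw [phi]
      rw [natDegree_eq_of_degree_eq (degree_add_eq_left_of_degree_lt hsmall), hbigd]

lemma phi_monic (a : ℕ → ℂ) (m : ℕ) : (phi a m).Monic := (phi_aux a m).1

lemma phi_natDegree (a : ℕ → ℂ) (m : ℕ) : (phi a m).natDegree = m := (phi_aux a m).2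

lemma rev_eval {f : Polynomial ℂ} {z : ℂ} (hz : z ≠ 0) :
    f.reverse.eval z = z ^ f.natDegree * f.eval z⁻¹ := by
  have : Invertible z⁻¹ := invertibleOfNonzero (inv_ne_zero hz)
  have h := Polynomial.eval₂_reverse_mul_pow (RingHom.id ℂ) z⁻¹ f
  rw [invOf_eq_inv, inv_inv] at h
  have h : f.reverse.eval z * (z⁻¹)^f.natDegree = f.eval z⁻¹ := h
  have hzd : z ^ f.natDegree ≠ 0 := pow_ne_zero _ hz
  calc eval z f.reverse = eval z f.reverse * ((z⁻¹)^f.natDegree * z^f.natDegree) := by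
        rw [inv_pow, inv_mul_cancel₀ hzd, mul_one]
    _ = z^f.natDegree * eval z⁻¹ f := by rw [← mul_assoc, h]; ring

lemma mapc_eval (p : Polynomial ℂ) (w : ℂ) :
    (p.map (starRingEnd ℂ)).eval w = conj (p.eval (conj w)) := by
  rw [eval_map]
  have := Polynomial.eval₂_hom (starRingEnd ℂ) (p := p) (conj w)
  simpa using this

lemma revc_eval (p : Polynomial ℂ) {z : ℂ} (hz : z ≠ 0) :
    (revc p).eval z = z ^ p.natDegree * (p.map (starRingEnd ℂ)).eval z⁻¹ := by
  rw [revc, rev_eval hz, natDegree_map_eq_of_injective (starRingEnd ℂ).injective]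

lemma mapc_revc_eval (p : Polynomial ℂ) {z : ℂ} (hz : z ≠ 0) :
    ((revc p).map (starRingEnd ℂ)).eval z⁻¹ = (z ^ p.natDegree)⁻¹ * p.eval z := by
  have hcz : (conj z : ℂ) ≠ 0 := by simpa using hz
  have h1 : ((revc p).map (starRingEnd ℂ)).eval z⁻¹ = conj ((revc p).eval (conj z)⁻¹) := by
    rw [mapc_eval, map_inv₀]
  rw [h1, revc_eval p (inv_ne_zero hcz), inv_inv, mapc_eval, Complex.conj_conj]
  simp [map_mul, map_pow, map_inv₀, inv_pow]

lemma revc_phi_succ (a : ℕ → ℂ) (k : ℕ) :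
    revc (phi a (k+1)) = revc (phi a k) + Polynomial.C (conj (a (k+1))) * (X * phi a k) := by
  apply eq_of_infinite_eval_eq
  apply Set.Infinite.mono (s := ({0}ᶜ : Set ℂ))
  · intro z hz
    have hz' : z ≠ 0 := by simpa using hz
    have hzk : z ^ k ≠ 0 := pow_ne_zero _ hz'
    simp only [Set.mem_setOf_eq]
    rw [revc_eval _ hz', phi_natDegree]
    have hmap : (phi a (k+1)).map (starRingEnd ℂ)
        = X * (phi a k).map (starRingEnd ℂ)
          + Polynomial.C (conj (a (k+1))) * (revc (phi a k)).map (starRingEnd ℂ) := by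
      simp [phi, Polynomial.map_add, Polynomial.map_mul, Polynomial.map_X, Polynomial.map_C]
    rw [hmap]
    simp only [eval_add, eval_mul, eval_X, eval_C]
    rw [mapc_revc_eval _ hz', revc_eval _ hz', phi_natDegree]
    field_simp
    ring
  · simp only [← Set.infinite_coe_iff]
    exact Set.infinite_coe_iff.mpr ((Set.finite_singleton (0:ℂ)).infinite_compl)

lemma revc_eval_zero (a : ℕ → ℂ) (k : ℕ) : (revc (phi a k)).eval 0 = 1 := by
  rw [← Polynomial.coeff_zero_eq_eval_zero, revc, coeff_zero_reverse]
  exact ((phi_monic a k).map (starRingEnd ℂ)).leadingCoeff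

lemma phi_eval_zero (a : ℕ → ℂ) (k : ℕ) : (phi a (k+1)).eval 0 = a (k+1) := by
  simp [phi, revc_eval_zero]

lemma abs_sq_ne_one {w : ℂ} (h : ‖w‖ ≠ 1) : 1 - ‖w‖ ^ 2 ≠ 0 := by
  intro hh
  apply h
  have hnn := norm_nonneg w
  have h2 : (‖w‖ - 1) * (‖w‖ + 1) = 0 := by nlinarith
  rcases mul_eq_zero.mp h2 with h3 | h3
  · linarith
  · linarith

lemma sgn_facts (a : ℕ → ℂ) (k : ℕ) (h : ‖a k‖ ≠ 1) :
    sgn a k * rho a k ^ 2 = 1 - ‖a k‖ ^ 2 ∧ rho a k ≠ 0 ∧ sgn a k ^ 2 = 1 := by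
  set x := 1 - ‖a k‖ ^ 2 with hx
  have hx0 : x ≠ 0 := abs_sq_ne_one h
  have hr2 : rho a k ^ 2 = |x| := Real.sq_sqrt (abs_nonneg x)
  refine ⟨?_, ?_, ?_⟩
  · rw [sgn, hr2, ← hx]
    rcases lt_trichotomy x 0 with hlt | heq | hgt
    · rw [Real.sign_of_neg hlt, abs_of_neg hlt]; ring
    · exact absurd heq hx0
    · rw [Real.sign_of_pos hgt, abs_of_pos hgt]; ring
  · rw [rho, Real.sqrt_ne_zero']
    exact abs_pos.mpr hx0
  · rw [sgn, ← hx]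
    rcases lt_trichotomy x 0 with hlt | heq | hgt
    · rw [Real.sign_of_neg hlt]; ring
    · exact absurd heq hx0
    · rw [Real.sign_of_pos hgt]; ring

lemma esgn_succ (a : ℕ → ℂ) (k : ℕ) : esgn a (k+1) = esgn a k * sgn a (k+1) :=
  Finset.prod_Icc_succ_top (by omega) _

lemma kap_succ (a : ℕ → ℂ) (k : ℕ) : kap a (k+1) = kap a k * (rho a (k+1))⁻¹ :=
  Finset.prod_Icc_succ_top (by omega) _

lemma key_sum (a : ℕ → ℂ) : ∀ m : ℕ, (∀ k, 1 ≤ k → k ≤ m → ‖a k‖ ≠ 1) → ∀ z : ℂ,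
    ∑ k ∈ Finset.range (m+1), ((esgn a k : ℝ) : ℂ) * ((kap a k : ℝ) : ℂ)^2 * z^(m-k)
        * (phi a k).eval z * (revc (phi a k)).eval z
    = ((esgn a m : ℝ) : ℂ) * ((kap a m : ℝ) : ℂ)^2 *
        ((phi a m).eval z * (revc (phi a m)).eval z
          + z * ((revc (phi a m)).eval z * ((phi a m).derivative).eval z
               - (phi a m).eval z * ((revc (phi a m)).derivative).eval z)) := by
  intro m
  induction m with
  | zero =>
    intro _ z
    simp [esgn, kap, phi, revc, Polynomial.reverse, Polynomial.reflect_one]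
  | succ k ih =>
    intro ha z
    have ih' := ih (fun j h1 h2 => ha j h1 (by omega)) z
    obtain ⟨hsr, hr0, hs2⟩ := sgn_facts a (k+1) (ha (k+1) (by omega) le_rfl)
    -- numeric identity in ℂ
    have hAc : a (k+1) * conj (a (k+1)) = ((‖a (k+1)‖ ^ 2 : ℝ) : ℂ) := by
      rw [Complex.mul_conj, Complex.sq_norm]
    have hreal : (esgn a k * sgn a (k+1)) * (kap a k * (rho a (k+1))⁻¹)^2
        * (1 - ‖a (k+1)‖ ^ 2) = esgn a k * kap a k ^ 2 := by
      have hrr : (rho a (k+1))⁻¹ ^ 2 * rho a (k+1) ^ 2 = 1 := by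
        rw [inv_pow]; exact inv_mul_cancel₀ (pow_ne_zero _ hr0)
      rw [← hsr]
      calc esgn a k * sgn a (k+1) * (kap a k * (rho a (k+1))⁻¹)^2 * (sgn a (k+1) * rho a (k+1)^2)
          = esgn a k * kap a k ^ 2 * (sgn a (k+1) ^ 2)
              * ((rho a (k+1))⁻¹ ^ 2 * rho a (k+1) ^ 2) := by ring
        _ = esgn a k * kap a k ^ 2 := by rw [hs2, hrr]; ring
    have hc : ((esgn a (k+1) : ℝ) : ℂ) * ((kap a (k+1) : ℝ) : ℂ)^2
        * (1 - a (k+1) * conj (a (k+1))) = ((esgn a k : ℝ) : ℂ) * ((kap a k : ℝ) : ℂ)^2 := by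
      rw [hAc, esgn_succ, kap_succ]
      push_cast
      exact_mod_cast congrArg (fun x : ℝ => (x : ℂ)) hreal
    rw [Finset.sum_range_succ]
    have hsum : ∑ j ∈ Finset.range (k+1), ((esgn a j : ℝ) : ℂ) * ((kap a j : ℝ) : ℂ)^2
          * z^(k+1-j) * (phi a j).eval z * (revc (phi a j)).eval z
        = z * ∑ j ∈ Finset.range (k+1), ((esgn a j : ℝ) : ℂ) * ((kap a j : ℝ) : ℂ)^2
          * z^(k-j) * (phi a j).eval z * (revc (phi a j)).eval z := by
      rw [Finset.mul_sum]
      refine Finset.sum_congr rfl ?_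
      intro j hj
      have hjk : j ≤ k := by simpa [Nat.lt_succ_iff] using hj
      have : k + 1 - j = (k - j) + 1 := by omega
      rw [this, pow_succ]
      ring
    rw [hsum, ih']
    -- eval recurrences
    have hP : (phi a (k+1)).eval z
        = z * (phi a k).eval z + a (k+1) * (revc (phi a k)).eval z := by
      simp [phi]
    have hQ : (revc (phi a (k+1))).eval z
        = (revc (phi a k)).eval z + conj (a (k+1)) * (z * (phi a k).eval z) := by
      rw [revc_phi_succ]; simp
    have hP' : ((phi a (k+1)).derivative).eval z
        = (phi a k).eval z + z * ((phi a k).derivative).eval z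
          + a (k+1) * ((revc (phi a k)).derivative).eval z := by
      simp only [phi, derivative_add, derivative_mul, derivative_X, derivative_C]
      simp
    have hQ' : ((revc (phi a (k+1))).derivative).eval z
        = ((revc (phi a k)).derivative).eval z
          + conj (a (k+1)) * ((phi a k).eval z + z * ((phi a k).derivative).eval z) := by
      rw [revc_phi_succ]
      simp only [derivative_add, derivative_mul, derivative_X, derivative_C]
      simp
    rw [hP, hQ, hP', hQ']
    set P := (phi a k).eval z
    set Q := (revc (phi a k)).eval z
    set P' := ((phi a k).derivative).eval z
    set Q' := ((revc (phi a k)).derivative).eval z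
    simp only [Nat.sub_self, pow_zero]
    linear_combination (-(z * (P * Q + z * (Q * P' - P * Q')))) * hc

lemma kap_ne_zero (a : ℕ → ℂ) (m : ℕ) (ha : ∀ j, 1 ≤ j → j ≤ m → ‖a j‖ ≠ 1) :
    kap a m ≠ 0 := by
  rw [kap]
  apply Finset.prod_ne_zero_iff.mpr
  intro j hj
  rw [Finset.mem_Icc] at hj
  exact inv_ne_zero (sgn_facts a j (ha j hj.1 hj.2)).2.1

lemma Kker_closed (a : ℕ → ℂ) (m : ℕ) (ha : ∀ j, 1 ≤ j → j ≤ m → ‖a j‖ ≠ 1)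
    {z : ℂ} (hz : z ≠ 0) :
    Kker a m z ((conj z)⁻¹)
      = (z^m)⁻¹ * (((esgn a m : ℝ) : ℂ) * ((kap a m : ℝ) : ℂ)^2 *
          ((phi a m).eval z * (revc (phi a m)).eval z
            + z * ((revc (phi a m)).eval z * ((phi a m).derivative).eval z
                 - (phi a m).eval z * ((revc (phi a m)).derivative).eval z))) := by
  rw [← key_sum a m ha z, Kker, Finset.mul_sum]
  refine Finset.sum_congr rfl ?_
  intro k hk
  have hkm : k ≤ m := by simpa [Nat.lt_succ_iff] using hk
  have h1 : (phin a k).eval z = ((kap a k : ℝ) : ℂ) * (phi a k).eval z := by simp [phin]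
  have h2 : conj ((phin a k).eval ((conj z)⁻¹))
      = ((kap a k : ℝ) : ℂ) * ((z^k)⁻¹ * (revc (phi a k)).eval z) := by
    have hx : (phin a k).eval ((conj z)⁻¹)
        = ((kap a k : ℝ) : ℂ) * (phi a k).eval ((conj z)⁻¹) := by simp [phin]
    rw [hx, map_mul, Complex.conj_ofReal]
    congr 1
    have hme : ((phi a k).map (starRingEnd ℂ)).eval z⁻¹
        = conj ((phi a k).eval ((conj z)⁻¹)) := by
      rw [mapc_eval, map_inv₀]
    have hre := revc_eval (phi a k) hz
    rw [phi_natDegree] at hre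
    rw [← hme, hre, inv_mul_cancel_left₀ (pow_ne_zero _ hz)]
  rw [h1, h2]
  have hpow : z^(m-k) * z^k = z^m := by rw [← pow_add]; congr 1; omega
  have hzk : (z^k)⁻¹ = (z^m)⁻¹ * z^(m-k) := by
    field_simp
    rw [← hpow]
    ring
  rw [hzk]
  ring

/-- Theorem 4.3: for the extensions φ_n^t(z) = z φ_{n−1}(z) + t φ*_{n−1}(z)
of a fixed finite segment, any holomorphic branch λ(t) of zeros satisfies
K_{n−1}(λ(t), conj(λ(t))⁻¹) λ'(t) = −e_{n−1} λ(t)^{1−n} (φ̂*_{n−1}(λ(t)))² when λ(t) ≠ 0,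
and a_{n−1} λ'(t) = −1 when λ(t) = 0. -/
theorem extension_zero_derivative
    (n : ℕ) (hn : 2 ≤ n) (a : ℕ → ℂ)
    (ha : ∀ j, 1 ≤ j → j ≤ n - 1 → ‖a j‖ ≠ 1)
    (U : Set ℂ) (hU : IsOpen U) (lam : ℂ → ℂ) (hlam : DifferentiableOn ℂ lam U)
    (hroot : ∀ t ∈ U, (X * phi a (n - 1) + Polynomial.C t * revc (phi a (n - 1))).eval (lam t) = 0) :
    ∀ t ∈ U,
      (lam t ≠ 0 →
        Kker a (n - 1) (lam t) ((conj (lam t))⁻¹) * deriv lam t =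
          -((esgn a (n - 1) : ℝ) : ℂ) * lam t ^ ((1 : ℤ) - n) *
            ((revc (phin a (n - 1))).eval (lam t)) ^ 2) ∧
      (lam t = 0 → a (n - 1) * deriv lam t = -1) := by
  obtain ⟨m, rfl⟩ : ∃ m, n = m + 1 := ⟨n - 1, by omega⟩
  have hm1 : 1 ≤ m := by omega
  simp only [Nat.add_sub_cancel] at ha hroot ⊢
  intro t ht
  have hL : HasDerivAt lam (deriv lam t) t :=
    ((hlam t ht).differentiableAt (hU.mem_nhds ht)).hasDerivAt
  set L := deriv lam t with hLdef
  have hφd : HasDerivAt (fun s => (phi a m).eval (lam s))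
      ((phi a m).derivative.eval (lam t) * L) t := by
    simpa [Function.comp_def] using (Polynomial.hasDerivAt (phi a m) (lam t)).comp t hL
  have hψd : HasDerivAt (fun s => (revc (phi a m)).eval (lam s))
      ((revc (phi a m)).derivative.eval (lam t) * L) t := by
    simpa [Function.comp_def] using (Polynomial.hasDerivAt (revc (phi a m)) (lam t)).comp t hL
  have hFd : HasDerivAt (fun s => lam s * (phi a m).eval (lam s)
        + s * (revc (phi a m)).eval (lam s))
      (L * (phi a m).eval (lam t) + lam t * ((phi a m).derivative.eval (lam t) * L)
        + (1 * (revc (phi a m)).eval (lam t)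
            + t * ((revc (phi a m)).derivative.eval (lam t) * L))) t :=
    (hL.mul hφd).add ((hasDerivAt_id t).mul hψd)
  have hev : (fun s => lam s * (phi a m).eval (lam s) + s * (revc (phi a m)).eval (lam s))
      =ᶠ[nhds t] (fun _ => (0:ℂ)) := by
    filter_upwards [hU.mem_nhds ht] with s hs
    have h := hroot s hs
    simpa using h
  have hD : L * (phi a m).eval (lam t) + lam t * ((phi a m).derivative.eval (lam t) * L)
      + (1 * (revc (phi a m)).eval (lam t)
          + t * ((revc (phi a m)).derivative.eval (lam t) * L)) = 0 := by
    have h0 := hFd.congr_of_eventuallyEq hev.symm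
    exact h0.unique (hasDerivAt_const t 0)
  have hrt : lam t * (phi a m).eval (lam t) + t * (revc (phi a m)).eval (lam t) = 0 := by
    have h := hroot t ht
    simpa using h
  constructor
  · intro hlt0
    have hκ : kap a m ≠ 0 := kap_ne_zero a m ha
    have hκC : ((kap a m : ℝ) : ℂ) ≠ 0 := by exact_mod_cast hκ
    have hnd : (phin a m).natDegree = m := by
      rw [phin, natDegree_C_mul hκC, phi_natDegree]
    have hrevphin : (revc (phin a m)).eval (lam t)
        = ((kap a m : ℝ) : ℂ) * (revc (phi a m)).eval (lam t) := by
      rw [revc_eval _ hlt0, hnd]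
      have hmapphin : (phin a m).map (starRingEnd ℂ)
          = Polynomial.C ((kap a m : ℝ) : ℂ) * (phi a m).map (starRingEnd ℂ) := by
        simp [phin, Polynomial.map_mul, Polynomial.map_C, Complex.conj_ofReal]
      rw [hmapphin]
      simp only [eval_mul, eval_C]
      have hre := revc_eval (phi a m) hlt0
      rw [phi_natDegree] at hre
      rw [hre]
      field_simp
    have hzpow : lam t ^ ((1 : ℤ) - ((m : ℤ) + 1)) = ((lam t)^m)⁻¹ := by
      have he : ((1:ℤ) - ((m : ℤ) + 1)) = -(m : ℤ) := by ring
      rw [he, zpow_neg, zpow_natCast]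
    rw [Kker_closed a m ha hlt0]
    push_cast
    rw [hzpow, hrevphin]
    have hkey : ((phi a m).eval (lam t) * (revc (phi a m)).eval (lam t)
          + lam t * ((revc (phi a m)).eval (lam t) * (phi a m).derivative.eval (lam t)
            - (phi a m).eval (lam t) * (revc (phi a m)).derivative.eval (lam t))) * L
        = -((revc (phi a m)).eval (lam t))^2 := by
      linear_combination ((revc (phi a m)).eval (lam t)) * hD
        - ((revc (phi a m)).derivative.eval (lam t) * L) * hrt
    linear_combination (((lam t)^m)⁻¹ * ((esgn a m : ℝ) : ℂ) * ((kap a m : ℝ) : ℂ)^2) * hkey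
  · intro hlt0
    have hψ0 : (revc (phi a m)).eval 0 = 1 := revc_eval_zero a m
    have ht0 : t = 0 := by
      have h := hrt
      rw [hlt0] at h
      simpa [hψ0] using h
    have hφ0 : (phi a m).eval 0 = a m := by
      obtain ⟨k, rfl⟩ : ∃ k, m = k + 1 := ⟨m - 1, by omega⟩
      exact phi_eval_zero a k
    rw [hlt0, ht0] at hD
    rw [hφ0, hψ0] at hD
    linear_combination hD
end
end

section
/- Fix n ≥ 1, an index 1 ≤ k ≤ n, and Schur parameters a_1, …, a_n with |a_j| ≠ 1. For t ∈ ℝ set a_j(t) := a_j for j ≠ k and a_k(t) := e^{it} a_k; let φ_j^t be the monic polynomials generated by the recurrence with parameters a_j(t), and φ̂_j^t := κ_j φ_j^t (the quantities ρ_j, ε_j, κ_j, e_j are unchanged by the perturbation since |a_j(t)| = |a_j|), and K_{n−1}^t(z,y) := Σ_{j=0}^{n−1} e_j φ̂_j^t(z) conj(φ̂_j^t(y)). Let I ⊆ ℝ be an open interval and λ : I → ℂ differentiable with φ_n^t(λ(t)) = 0 and λ(t) ≠ 0 for all t ∈ I. Then for all t ∈ I: K_{n−1}^t(λ(t), conj(λ(t))^{−1})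 · λ'(t) = −i · λ(t)^{1−k} · [ e_{k−1} a_k(t) (φ̂*_{k−1}(λ(t)))² + e_k conj(a_k(t)) (φ̂_k^t(λ(t)))² ], where φ̂*_{k−1} = φ̂*_{k−1} is t-independent because the parameters a_1, …, a_{k−1} are not perturbed. -/
open LaurentPolynomial Polynomial Complex ComplexConjugate

noncomputable section

/-- Orthonormal polynomials for the perturbed parameters `b`, with the normalization
constants κ_j taken from the unperturbed parameters `a` (they are unchanged by a
rotation of the parameters). -/
def phinPert (a b : ℕ → ℂ) (j : ℕ) : Polynomial ℂ :=
  Polynomial.C ((kap a j : ℝ) : ℂ) * phi b j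

/-- The perturbed kernel K_m(z,y) = Σ_{j=0}^m e_j φ̂_j^t(z) conj(φ̂_j^t(y)), with e_j taken
from the unperturbed parameters. -/
def KkerPert (a b : ℕ → ℂ) (m : ℕ) (z y : ℂ) : ℂ :=
  ∑ j ∈ Finset.range (m + 1),
    ((esgn a j : ℝ) : ℂ) * (phinPert a b j).eval z * conj ((phinPert a b j).eval y)

/-- Rotation of the k-th Schur parameter: a_k ↦ e^{it} a_k, the others unchanged. -/
def aRot1 (a : ℕ → ℂ) (k : ℕ) (t : ℝ) : ℕ → ℂ :=
  fun j => if j = k then Complex.exp (Complex.I * t) * a k else a j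

def psi (a : ℕ → ℂ) : ℕ → Polynomial ℂ
  | 0 => 1
  | j + 1 => psi a j + Polynomial.C (conj (a (j + 1))) * Polynomial.X * phi a j

lemma phi_monic_s13 (a : ℕ → ℂ) : ∀ j, (phi a j).Monic ∧ (phi a j).natDegree = j := by
  intro j
  induction j with
  | zero => exact ⟨monic_one, natDegree_one⟩
  | succ j ih =>
    obtain ⟨hm, hd⟩ := ih
    have hXm : (X * phi a j).Monic := monic_X.mul hm
    have hXd : (X * phi a j).natDegree = j + 1 := by
      rw [monic_X.natDegree_mul hm, hd, natDegree_X, add_comm]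
    have hrev : (revc (phi a j)).natDegree ≤ j :=
      le_trans (reverse_natDegree_le _) (le_trans natDegree_map_le hd.le)
    have hdeg : (Polynomial.C (a (j+1)) * revc (phi a j)).degree < (X * phi a j).degree := by
      have h1 : (Polynomial.C (a (j+1)) * revc (phi a j)).degree ≤ (j : WithBot ℕ) := by
        refine le_trans (degree_mul_le _ _) ?_
        calc (Polynomial.C (a (j+1))).degree + (revc (phi a j)).degree
            ≤ 0 + (j : WithBot ℕ) :=
              add_le_add degree_C_le ((degree_le_natDegree).trans (by exact_mod_cast hrev))
          _ = (j : WithBot ℕ) := by rw [zero_add]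
      have h2 : (X * phi a j).degree = ((j+1 : ℕ) : WithBot ℕ) := by
        rw [degree_eq_natDegree hXm.ne_zero, hXd]
      rw [h2]
      exact lt_of_le_of_lt h1 (by exact_mod_cast Nat.lt_succ_self j)
    refine ⟨hXm.add_of_left hdeg, ?_⟩
    show (X * phi a j + _).natDegree = j + 1
    rw [natDegree_add_eq_left_of_degree_lt hdeg, hXd]

lemma reflect_reflect_succ (p : Polynomial ℂ) (N : ℕ) (hp : p.natDegree ≤ N) :
    reflect (N + 1) (reflect N p) = X * p := by
  ext m
  rw [coeff_reflect, coeff_reflect]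
  match m with
  | 0 =>
    rw [show revAt (N+1) 0 = N+1 from revAt_le (by omega), coeff_X_mul_zero,
      revAt_eq_self_of_lt (by omega)]
    exact coeff_eq_zero_of_natDegree_lt (by omega)
  | m + 1 =>
    rw [coeff_X_mul]
    by_cases h : m + 1 ≤ N + 1
    · rw [show revAt (N+1) (m+1) = N+1-(m+1) from revAt_le h,
        show revAt N (N+1-(m+1)) = N - (N+1-(m+1)) from revAt_le (by omega)]
      congr 1
      omega
    · rw [show revAt (N+1) (m+1) = m+1 from revAt_eq_self_of_lt (by omega),
        revAt_eq_self_of_lt (show N < m+1 by omega)]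
      rw [coeff_eq_zero_of_natDegree_lt (by omega),
        coeff_eq_zero_of_natDegree_lt (by omega)]

lemma natDegree_map_conj (p : Polynomial ℂ) :
    (p.map (starRingEnd ℂ)).natDegree = p.natDegree :=
  natDegree_map_eq_of_injective (RingHom.injective _) p

lemma map_conj_conj (p : Polynomial ℂ) :
    (p.map (starRingEnd ℂ)).map (starRingEnd ℂ) = p := by
  rw [map_map]
  convert p.map_id
  ext x
  exact Complex.conj_conj x

lemma reflect_one_X : reflect 1 (X : Polynomial ℂ) = 1 := by
  have h := reflect_C_mul_X_pow 1 1 (c := (1:ℂ))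
  simpa using h

lemma psi_eq_revc (a : ℕ → ℂ) : ∀ j, psi a j = revc (phi a j) := by
  intro j
  induction j with
  | zero =>
    show (1 : Polynomial ℂ) = revc 1
    simp [revc, reverse]
  | succ j ih =>
    have hd : (phi a j).natDegree = j := (phi_monic_s13 a j).2
    have hdm : (phi a j |>.map (starRingEnd ℂ)).natDegree = j := by
      rw [natDegree_map_conj, hd]
    have hmrev : (revc (phi a j)).map (starRingEnd ℂ) = reflect j (phi a j) := by
      rw [revc, reverse, hdm, ← reflect_map, map_conj_conj]
    show psi a j + Polynomial.C (conj (a (j + 1))) * Polynomial.X * phi a j = _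
    rw [revc, reverse, natDegree_map_conj, (phi_monic_s13 a (j+1)).2]
    rw [show phi a (j+1) = X * phi a j + Polynomial.C (a (j + 1)) * revc (phi a j) from rfl]
    rw [Polynomial.map_add, Polynomial.map_mul, Polynomial.map_mul, Polynomial.map_X,
      Polynomial.map_C, reflect_add, reflect_C_mul, hmrev,
      reflect_reflect_succ _ _ hd.le,
      show j + 1 = 1 + j from by omega,
      reflect_mul X _ natDegree_X.le hdm.le, reflect_one_X, one_mul]
    rw [ih, revc, reverse, hdm]
    ring

lemma conj_eval (p : Polynomial ℂ) (y : ℂ) :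
    conj (p.eval y) = (p.map (starRingEnd ℂ)).eval (conj y) := by
  rw [eval_map, ← eval₂_at_apply]

lemma eval_revc_mul_pow (p : Polynomial ℂ) (z : ℂ) (hz : z ≠ 0) (N : ℕ)
    (hN : p.natDegree = N) :
    (revc p).eval z = z ^ N * conj (p.eval ((conj z)⁻¹)) := by
  have hinv : z⁻¹ ≠ 0 := inv_ne_zero hz
  letI : Invertible (z⁻¹) := invertibleOfNonzero hinv
  have hiz : ⅟(z⁻¹) = z := by rw [invOf_eq_inv, inv_inv]
  have hdm : (p.map (starRingEnd ℂ)).natDegree ≤ N := by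
    rw [natDegree_map_conj, hN]
  have h := eval₂_reflect_mul_pow (RingHom.id ℂ) (z⁻¹) N (p.map (starRingEnd ℂ)) hdm
  rw [hiz] at h
  have hrev : revc p = reflect N (p.map (starRingEnd ℂ)) := by
    rw [revc, reverse, natDegree_map_conj, hN]
  have h' : (revc p).eval z * z⁻¹ ^ N = (p.map (starRingEnd ℂ)).eval z⁻¹ := by
    rw [hrev]; exact h
  have hy : conj ((conj z)⁻¹) = z⁻¹ := by rw [map_inv₀, Complex.conj_conj]
  have h2 : (p.map (starRingEnd ℂ)).eval z⁻¹ = conj (p.eval ((conj z)⁻¹)) := by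
    rw [conj_eval, hy]
  have hzz : z⁻¹ ^ N * z ^ N = 1 := by
    rw [← mul_pow, inv_mul_cancel₀ hz, one_pow]
  calc (revc p).eval z = (revc p).eval z * (z⁻¹ ^ N * z ^ N) := by rw [hzz, mul_one]
    _ = ((revc p).eval z * z⁻¹ ^ N) * z ^ N := by ring
    _ = z ^ N * conj (p.eval ((conj z)⁻¹)) := by rw [h', h2]; ring

lemma phi_congr (a b : ℕ → ℂ) (j : ℕ) (h : ∀ i, 1 ≤ i → i ≤ j → b i = a i) :
    phi b j = phi a j := by
  induction j with
  | zero => rfl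
  | succ j ih =>
    have ihx := ih (fun i h1 h2 => h i h1 (by omega))
    show X * phi b j + Polynomial.C (b (j + 1)) * revc (phi b j) = _
    rw [ihx, h (j+1) (by omega) le_rfl]
    rfl

lemma revc_C_mul (r : ℂ) (hr : r ≠ 0) (p : Polynomial ℂ) :
    revc (Polynomial.C r * p) = Polynomial.C (conj r) * revc p := by
  rw [revc, Polynomial.map_mul, Polynomial.map_C, revc, reverse, reverse,
    natDegree_C_mul (by simpa using hr), reflect_C_mul]

lemma Nval_succ' : True := trivial

/-- The scalar recursion for the Wronskian-type quantity. -/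
def Nval (z w Δ : ℂ) (k : ℕ) (d uv : ℕ → ℂ) : ℕ → ℂ
  | 0 => 0
  | j + 1 => d (j + 1) * (w * uv j + z * Nval z w Δ k d uv j) + (if j + 1 = k then Δ else 0)

lemma Nval_succ (z w Δ : ℂ) (k : ℕ) (d uv : ℕ → ℂ) (j : ℕ) :
    Nval z w Δ k d uv (j+1)
      = d (j + 1) * (w * uv j + z * Nval z w Δ k d uv j) + (if j + 1 = k then Δ else 0) := rfl

lemma Nval_closed (z w Δ : ℂ) (k : ℕ) (hk : 1 ≤ k) (d uv : ℕ → ℂ) (j : ℕ) :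
    Nval z w Δ k d uv j =
      w * ∑ i ∈ Finset.range j, (∏ l ∈ Finset.Icc (i+1) j, d l) * z ^ (j - 1 - i) * uv i
        + (if k ≤ j then (∏ l ∈ Finset.Icc (k+1) j, d l) * z ^ (j - k) * Δ else 0) := by
  induction j with
  | zero => simp [Nval, Nat.not_le.mpr hk]
  | succ j ih =>
    have hsum : ∑ i ∈ Finset.range j, (∏ l ∈ Finset.Icc (i+1) (j+1), d l) * z ^ (j - i) * uv i
        = d (j+1) * (z * ∑ i ∈ Finset.range j,
            (∏ l ∈ Finset.Icc (i+1) j, d l) * z ^ (j - 1 - i) * uv i) := by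
      rw [Finset.mul_sum, Finset.mul_sum]
      refine Finset.sum_congr rfl ?_
      intro i hi
      rw [Finset.mem_range] at hi
      rw [Finset.prod_Icc_succ_top (show i+1 ≤ j+1 by omega) d,
        show j - i = (j - 1 - i) + 1 from by omega, pow_succ]
      ring
    have hind : (if k ≤ j+1 then (∏ l ∈ Finset.Icc (k+1) (j+1), d l) * z ^ (j+1-k) * Δ else 0)
        = d (j+1) * (z * (if k ≤ j then (∏ l ∈ Finset.Icc (k+1) j, d l) * z ^ (j-k) * Δ else 0))
          + (if j + 1 = k then Δ else 0) := by
      rcases Nat.lt_trichotomy j (k-1) with h | h | h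
      · rw [if_neg (by omega), if_neg (by omega), if_neg (by omega)]
        ring
      · rw [if_pos (by omega), if_neg (by omega), if_pos (by omega),
          show k = j + 1 from by omega]
        rw [show Finset.Icc (j+1+1) (j+1) = ∅ from Finset.Icc_eq_empty (by omega)]
        simp
      · rw [if_pos (by omega), if_pos (by omega), if_neg (by omega),
          Finset.prod_Icc_succ_top (show k+1 ≤ j+1 by omega) d,
          show j + 1 - k = (j - k) + 1 from by omega, pow_succ]
        ring
    rw [show Nval z w Δ k d uv (j+1)
        = d (j + 1) * (w * uv j + z * Nval z w Δ k d uv j) + (if j + 1 = k then Δ else 0)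
        from rfl, ih]
    simp only [Nat.add_sub_cancel]
    rw [Finset.sum_range_succ, hsum, hind, Finset.Icc_self, Finset.prod_singleton,
      Nat.sub_self, pow_zero]
    ring

lemma aRot1_hasDerivAt (a : ℕ → ℂ) (k m : ℕ) (t₀ : ℝ) :
    HasDerivAt (fun t => aRot1 a k t m) (if m = k then Complex.I * aRot1 a k t₀ m else 0) t₀ := by
  by_cases h : m = k
  · subst h
    rw [if_pos rfl]
    have h0 : HasDerivAt (fun t : ℝ => (t : ℂ)) 1 t₀ := by
      simpa using (hasDerivAt_id t₀).ofReal_comp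
    have h1 : HasDerivAt (fun t : ℝ => Complex.I * (t : ℂ)) (Complex.I * 1) t₀ := h0.const_mul _
    have h2 := (h1.cexp).mul_const (a m)
    have he : (fun t : ℝ => aRot1 a m t m) = fun t : ℝ => Complex.exp (Complex.I * (t : ℂ)) * a m := by
      funext t
      simp [aRot1]
    rw [he]
    have hv : Complex.I * aRot1 a m t₀ m = Complex.exp (Complex.I * t₀) * (Complex.I * 1) * a m := by
      rw [show aRot1 a m t₀ m = Complex.exp (Complex.I * t₀) * a m from by simp [aRot1]]
      ring
    rw [hv]
    exact h2
  · have he : (fun t : ℝ => aRot1 a k t m) = fun _ => a m := by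
      funext t; simp [aRot1, h]
    rw [if_neg h, he]
    exact hasDerivAt_const _ _

lemma aRot1_conj_hasDerivAt (a : ℕ → ℂ) (k m : ℕ) (t₀ : ℝ) :
    HasDerivAt (fun t => conj (aRot1 a k t m))
      (conj (if m = k then Complex.I * aRot1 a k t₀ m else 0)) t₀ := by
  have h := (aRot1_hasDerivAt a k m t₀).star
  simp only [starRingEnd_apply]
  convert h using 2

lemma phi_eval_zero_s13 (b : ℕ → ℂ) (x : ℂ) : (phi b 0).eval x = 1 := by
  show (1 : Polynomial ℂ).eval x = 1; simp

lemma psi_eval_zero (b : ℕ → ℂ) (x : ℂ) : (psi b 0).eval x = 1 := by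
  show (1 : Polynomial ℂ).eval x = 1; simp

lemma phi_eval_succ (b : ℕ → ℂ) (j : ℕ) (x : ℂ) :
    (phi b (j+1)).eval x = x * (phi b j).eval x + b (j+1) * (psi b j).eval x := by
  rw [show phi b (j+1) = X * phi b j + Polynomial.C (b (j+1)) * revc (phi b j) from rfl,
    ← psi_eq_revc]
  simp

lemma psi_eval_succ (b : ℕ → ℂ) (j : ℕ) (x : ℂ) :
    (psi b (j+1)).eval x = (psi b j).eval x + conj (b (j+1)) * (x * (phi b j).eval x) := by
  rw [show psi b (j+1) = psi b j + Polynomial.C (conj (b (j+1))) * Polynomial.X * phi b j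
    from rfl]
  simp
  ring

lemma key_deriv (a : ℕ → ℂ) (k : ℕ) (lam : ℝ → ℂ) (t₀ : ℝ) (w : ℂ)
    (hlam : HasDerivAt lam w t₀) (j : ℕ) :
    ∃ p q : ℂ,
      HasDerivAt (fun t => (phi (aRot1 a k t) j).eval (lam t)) p t₀ ∧
      HasDerivAt (fun t => (psi (aRot1 a k t) j).eval (lam t)) q t₀ ∧
      p * (psi (aRot1 a k t₀) j).eval (lam t₀) - q * (phi (aRot1 a k t₀) j).eval (lam t₀)
        = Nval (lam t₀) w
            (Complex.I * (conj (aRot1 a k t₀ k) * ((phi (aRot1 a k t₀) k).eval (lam t₀)) ^ 2 +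
              (1 - aRot1 a k t₀ k * conj (aRot1 a k t₀ k)) * aRot1 a k t₀ k *
                ((psi (aRot1 a k t₀) (k - 1)).eval (lam t₀)) ^ 2))
            k (fun m => 1 - aRot1 a k t₀ m * conj (aRot1 a k t₀ m))
            (fun m => (phi (aRot1 a k t₀) m).eval (lam t₀) *
              (psi (aRot1 a k t₀) m).eval (lam t₀)) j := by
  induction j with
  | zero =>
    refine ⟨0, 0, ?_, ?_, by simp [Nval, phi_eval_zero_s13, psi_eval_zero]⟩
    · have hfe : (fun t => (phi (aRot1 a k t) 0).eval (lam t)) = fun _ => (1:ℂ) := by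
        funext t; exact phi_eval_zero_s13 _ _
      rw [hfe]; exact hasDerivAt_const _ _
    · have hfe : (fun t => (psi (aRot1 a k t) 0).eval (lam t)) = fun _ => (1:ℂ) := by
        funext t; exact psi_eval_zero _ _
      rw [hfe]; exact hasDerivAt_const _ _
  | succ j ih =>
    obtain ⟨p, q, hp, hq, hN⟩ := ih
    have hc := aRot1_hasDerivAt a k (j+1) t₀
    have hcc := aRot1_conj_hasDerivAt a k (j+1) t₀
    have hfeU : (fun t => (phi (aRot1 a k t) (j+1)).eval (lam t))
        = fun t => lam t * ((phi (aRot1 a k t) j).eval (lam t))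
            + (aRot1 a k t (j+1)) * ((psi (aRot1 a k t) j).eval (lam t)) :=
      funext fun t => phi_eval_succ _ _ _
    have hfeV : (fun t => (psi (aRot1 a k t) (j+1)).eval (lam t))
        = fun t => ((psi (aRot1 a k t) j).eval (lam t))
            + conj (aRot1 a k t (j+1)) * (lam t * ((phi (aRot1 a k t) j).eval (lam t))) :=
      funext fun t => psi_eval_succ _ _ _
    have hU : HasDerivAt (fun t => (phi (aRot1 a k t) (j+1)).eval (lam t))
        ((w * (phi (aRot1 a k t₀) j).eval (lam t₀) + lam t₀ * p)
          + ((if j+1 = k then Complex.I * aRot1 a k t₀ (j+1) else 0)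
                * (psi (aRot1 a k t₀) j).eval (lam t₀)
             + aRot1 a k t₀ (j+1) * q)) t₀ := by
      rw [hfeU]; exact (hlam.mul hp).add (hc.mul hq)
    have hV : HasDerivAt (fun t => (psi (aRot1 a k t) (j+1)).eval (lam t))
        (q + (conj (if j+1 = k then Complex.I * aRot1 a k t₀ (j+1) else 0)
                * (lam t₀ * (phi (aRot1 a k t₀) j).eval (lam t₀))
              + conj (aRot1 a k t₀ (j+1))
                * (w * (phi (aRot1 a k t₀) j).eval (lam t₀) + lam t₀ * p))) t₀ := by
      rw [hfeV]; exact hq.add (hcc.mul (hlam.mul hp))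
    refine ⟨_, _, hU, hV, ?_⟩
    rw [Nval_succ]
    beta_reduce
    set NN := Nval (lam t₀) w
      (Complex.I * (conj (aRot1 a k t₀ k) * ((phi (aRot1 a k t₀) k).eval (lam t₀)) ^ 2 +
        (1 - aRot1 a k t₀ k * conj (aRot1 a k t₀ k)) * aRot1 a k t₀ k *
          ((psi (aRot1 a k t₀) (k - 1)).eval (lam t₀)) ^ 2))
      k (fun m => 1 - aRot1 a k t₀ m * conj (aRot1 a k t₀ m))
      (fun m => (phi (aRot1 a k t₀) m).eval (lam t₀) *
        (psi (aRot1 a k t₀) m).eval (lam t₀)) j with hNN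
    rw [phi_eval_succ, psi_eval_succ]
    by_cases hjk : j + 1 = k
    · have hpk : (phi (aRot1 a k t₀) k).eval (lam t₀)
          = lam t₀ * (phi (aRot1 a k t₀) j).eval (lam t₀)
            + aRot1 a k t₀ (j+1) * (psi (aRot1 a k t₀) j).eval (lam t₀) := by
        rw [← hjk, phi_eval_succ]
      have hsk : psi (aRot1 a k t₀) (k - 1) = psi (aRot1 a k t₀) j := by congr 1; omega
      have hak : aRot1 a k t₀ k = aRot1 a k t₀ (j+1) := by rw [hjk]
      rw [if_pos hjk, if_pos hjk, hpk, hsk, hak]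
      simp only [map_mul, Complex.conj_I]
      linear_combination ((1 - aRot1 a k t₀ (j+1) * conj (aRot1 a k t₀ (j+1))) * lam t₀) * hN
    · rw [if_neg hjk, if_neg hjk, map_zero]
      linear_combination ((1 - aRot1 a k t₀ (j+1) * conj (aRot1 a k t₀ (j+1))) * lam t₀) * hN

lemma one_sub_abs_ne (a : ℕ → ℂ) (l : ℕ) (h : ‖a l‖ ≠ 1) :
    1 - ‖a l‖ ^ 2 ≠ 0 := by
  intro h0
  apply h
  nlinarith [norm_nonneg (a l)]

lemma rho_pos (a : ℕ → ℂ) (l : ℕ) (h : ‖a l‖ ≠ 1) : 0 < rho a l := by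
  rw [rho]
  exact Real.sqrt_pos.mpr (abs_pos.mpr (one_sub_abs_ne a l h))

lemma sgn_mul_self (a : ℕ → ℂ) (l : ℕ) (h : ‖a l‖ ≠ 1) :
    sgn a l * sgn a l = 1 := by
  rcases Real.sign_apply_eq_of_ne_zero _ (one_sub_abs_ne a l h) with h1 | h1 <;>
    rw [sgn, h1] <;> norm_num

lemma sgn_rho_sq (a : ℕ → ℂ) (l : ℕ) (h : ‖a l‖ ≠ 1) :
    sgn a l * rho a l ^ 2 = 1 - ‖a l‖ ^ 2 := by
  rw [rho, sgn, Real.sq_sqrt (abs_nonneg _)]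
  rcases lt_trichotomy (1 - ‖a l‖ ^ 2) 0 with h1 | h1 | h1
  · rw [Real.sign_of_neg h1, abs_of_neg h1]; ring
  · exact absurd h1 (one_sub_abs_ne a l h)
  · rw [Real.sign_of_pos h1, abs_of_pos h1]; ring

lemma Icc_one_eq_Ioc (m : ℕ) : Finset.Icc 1 m = Finset.Ioc 0 m := by
  rw [← Finset.Icc_add_one_left_eq_Ioc]
  rfl

lemma kap_pos (a : ℕ → ℂ) (i n : ℕ) (hin : i ≤ n)
    (hal : ∀ l, 1 ≤ l → l ≤ n → ‖a l‖ ≠ 1) : 0 < kap a i := by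
  rw [kap]
  refine Finset.prod_pos fun l hl => ?_
  rw [Finset.mem_Icc] at hl
  exact inv_pos.mpr (rho_pos a l (hal l hl.1 (hl.2.trans hin)))

lemma prodA (a : ℕ → ℂ) (n i : ℕ) (hin : i ≤ n)
    (hal : ∀ l, 1 ≤ l → l ≤ n → ‖a l‖ ≠ 1) :
    esgn a n * (kap a n) ^ 2 * ∏ l ∈ Finset.Icc (i+1) n, (1 - ‖a l‖ ^ 2)
      = esgn a i * (kap a i) ^ 2 := by
  have hmem : ∀ l ∈ Finset.Ioc i n, ‖a l‖ ≠ 1 := by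
    intro l hl
    rw [Finset.mem_Ioc] at hl
    exact hal l (by omega) hl.2
  rw [Finset.Icc_add_one_left_eq_Ioc, esgn, esgn, kap, kap, Icc_one_eq_Ioc, Icc_one_eq_Ioc,
    ← Finset.prod_Ioc_consecutive (fun l => sgn a l) (Nat.zero_le i) hin,
    ← Finset.prod_Ioc_consecutive (fun l => (rho a l)⁻¹) (Nat.zero_le i) hin]
  have h1 : ∏ l ∈ Finset.Ioc i n, (1 - ‖a l‖ ^ 2)
      = (∏ l ∈ Finset.Ioc i n, sgn a l) * ∏ l ∈ Finset.Ioc i n, rho a l ^ 2 := by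
    rw [← Finset.prod_mul_distrib]
    exact Finset.prod_congr rfl fun l hl => (sgn_rho_sq a l (hmem l hl)).symm
  rw [h1]
  have hS : (∏ l ∈ Finset.Ioc i n, sgn a l) * (∏ l ∈ Finset.Ioc i n, sgn a l) = 1 := by
    rw [← Finset.prod_mul_distrib]
    rw [Finset.prod_congr rfl fun l hl => sgn_mul_self a l (hmem l hl)]
    exact Finset.prod_const_one
  have hR : (∏ l ∈ Finset.Ioc i n, (rho a l)⁻¹) ^ 2 * (∏ l ∈ Finset.Ioc i n, rho a l ^ 2)
      = 1 := by
    rw [← Finset.prod_pow, ← Finset.prod_mul_distrib]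
    rw [Finset.prod_congr rfl (g := fun _ => (1:ℝ)) fun l hl => ?_]
    · exact Finset.prod_const_one
    · have := (rho_pos a l (hmem l hl)).ne'
      field_simp
  set S := ∏ l ∈ Finset.Ioc i n, sgn a l
  set Ri := ∏ l ∈ Finset.Ioc i n, (rho a l)⁻¹
  set Rp := ∏ l ∈ Finset.Ioc i n, rho a l ^ 2
  set Ei := ∏ l ∈ Finset.Ioc 0 i, sgn a l
  set Ki := ∏ l ∈ Finset.Ioc 0 i, (rho a l)⁻¹
  linear_combination (Ei * Ki^2 * Ri^2 * Rp) * hS + (Ei * Ki^2) * hR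


/-- Theorem 4.5: variation of the nonzero zeros of the orthonormal
polynomials under rotation of the k-th Schur parameter. -/
theorem zero_variation_single_rotation
    (n k : ℕ) (hn : 1 ≤ n) (hk1 : 1 ≤ k) (hkn : k ≤ n)
    (a : ℕ → ℂ) (ha : ∀ j, 1 ≤ j → j ≤ n → ‖a j‖ ≠ 1)
    (α β : ℝ) (lam : ℝ → ℂ)
    (hdiff : ∀ t ∈ Set.Ioo α β, DifferentiableAt ℝ lam t)
    (hroot : ∀ t ∈ Set.Ioo α β, (phi (aRot1 a k t) n).eval (lam t) = 0)
    (hne : ∀ t ∈ Set.Ioo α β, lam t ≠ 0) :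
    ∀ t ∈ Set.Ioo α β,
      KkerPert a (aRot1 a k t) (n - 1) (lam t) ((conj (lam t))⁻¹) * deriv lam t =
        -Complex.I * lam t ^ ((1 : ℤ) - k) *
          (((esgn a (k - 1) : ℝ) : ℂ) * aRot1 a k t k *
              ((revc (phin a (k - 1))).eval (lam t)) ^ 2 +
            ((esgn a k : ℝ) : ℂ) * conj (aRot1 a k t k) *
              ((phinPert a (aRot1 a k t) k).eval (lam t)) ^ 2) := by
  intro t₀ ht
  have hz : lam t₀ ≠ 0 := hne t₀ ht
  obtain ⟨p, q, hp, hq, hN⟩ := key_deriv a k lam t₀ (deriv lam t₀) (hdiff t₀ ht).hasDerivAt n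
  set z := lam t₀ with hzdef
  set w := deriv lam t₀ with hwdef
  set b₀ := aRot1 a k t₀ with hb₀def
  -- the t-derivative of the vanishing function is zero
  have hev : (fun t => (phi (aRot1 a k t) n).eval (lam t)) =ᶠ[nhds t₀] fun _ => (0:ℂ) := by
    filter_upwards [Ioo_mem_nhds ht.1 ht.2] with t htm
    exact hroot t htm
  have hp0 : p = 0 := hp.unique ((hasDerivAt_const t₀ (0:ℂ)).congr_of_eventuallyEq hev)
  have hU0 : (phi b₀ n).eval z = 0 := hroot t₀ ht
  rw [hp0, hU0, zero_mul, mul_zero, sub_zero] at hN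
  rw [Nval_closed _ _ _ _ hk1 _ _ n, if_pos hkn] at hN
  beta_reduce at hN
  -- basic facts
  have habs : ∀ l, ‖b₀ l‖ = ‖a l‖ := by
    intro l
    rw [hb₀def, aRot1]
    by_cases hl : l = k
    · rw [if_pos hl, norm_mul, Complex.norm_exp]
      simp [hl]
    · rw [if_neg hl]
  have hd : ∀ l, (1 - b₀ l * conj (b₀ l)) = ((1 - ‖a l‖ ^ 2 : ℝ) : ℂ) := by
    intro l
    rw [Complex.mul_conj, Complex.normSq_eq_norm_sq, habs l]
    push_cast
    ring
  have hprod : ∀ i, (∏ l ∈ Finset.Icc (i+1) n, (1 - b₀ l * conj (b₀ l)))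
      = ((∏ l ∈ Finset.Icc (i+1) n, (1 - ‖a l‖ ^ 2) : ℝ) : ℂ) := by
    intro i
    rw [Complex.ofReal_prod]
    exact Finset.prod_congr rfl fun l _ => hd l
  -- rewrite the kernel
  have hker : KkerPert a b₀ (n-1) z ((conj z)⁻¹)
      = ∑ j ∈ Finset.range n, ((esgn a j : ℝ):ℂ) * ((kap a j : ℝ):ℂ)^2
          * ((phi b₀ j).eval z * (psi b₀ j).eval z) * (z^j)⁻¹ := by
    rw [KkerPert, show n - 1 + 1 = n from by omega]
    refine Finset.sum_congr rfl fun j _ => ?_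
    rw [phinPert, eval_mul, eval_C, eval_mul, eval_C, map_mul, Complex.conj_ofReal]
    have hcj : conj ((phi b₀ j).eval ((conj z)⁻¹)) = (z^j)⁻¹ * (revc (phi b₀ j)).eval z := by
      rw [eval_revc_mul_pow (phi b₀ j) z hz j (phi_monic_s13 b₀ j).2]
      have : (z:ℂ)^j ≠ 0 := pow_ne_zero _ hz
      field_simp
    rw [hcj, ← psi_eq_revc]
    ring
  -- relate the kernel sum to the sum in hN
  have hSrel : ∑ j ∈ Finset.range n, ((esgn a j : ℝ):ℂ) * ((kap a j : ℝ):ℂ)^2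
          * ((phi b₀ j).eval z * (psi b₀ j).eval z) * (z^j)⁻¹
      = ((esgn a n : ℝ):ℂ) * ((kap a n : ℝ):ℂ)^2 * (z^(n-1))⁻¹
        * ∑ i ∈ Finset.range n, (∏ l ∈ Finset.Icc (i+1) n, (1 - b₀ l * conj (b₀ l)))
            * z^(n-1-i) * ((phi b₀ i).eval z * (psi b₀ i).eval z) := by
    rw [Finset.mul_sum]
    refine Finset.sum_congr rfl fun i hi => ?_
    rw [Finset.mem_range] at hi
    rw [hprod i]
    have hPAc : ((esgn a n : ℝ):ℂ) * ((kap a n : ℝ):ℂ)^2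
        * ((∏ l ∈ Finset.Icc (i+1) n, (1 - ‖a l‖ ^ 2) : ℝ):ℂ)
        = ((esgn a i : ℝ):ℂ) * ((kap a i : ℝ):ℂ)^2 := by
      have := prodA a n i (by omega) ha
      push_cast
      exact_mod_cast congrArg (fun x : ℝ => (x : ℂ)) this
    have hzi : (z:ℂ)^i ≠ 0 := pow_ne_zero _ hz
    have hzn : (z:ℂ)^(n-1) ≠ 0 := pow_ne_zero _ hz
    have h1 : z^(n-1-i) * (z^(n-1))⁻¹ = (z^i)⁻¹ := by
      rw [show n-1 = (n-1-i)+i from by omega, pow_add]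
      have : (z:ℂ)^(n-1-i) ≠ 0 := pow_ne_zero _ hz
      field_simp
      rw [Nat.add_sub_cancel]
    rw [← hPAc]
    linear_combination (-((esgn a n : ℝ):ℂ) * ((kap a n : ℝ):ℂ)^2
      * ((∏ l ∈ Finset.Icc (i+1) n, (1 - ‖a l‖ ^ 2) : ℝ):ℂ)
      * ((phi b₀ i).eval z * (psi b₀ i).eval z)) * h1
  have hrevphin : (revc (phin a (k-1))).eval z
      = ((kap a (k-1) : ℝ):ℂ) * (psi b₀ (k-1)).eval z := by
    have hkapne : ((kap a (k-1) : ℝ):ℂ) ≠ 0 := by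
      exact_mod_cast (kap_pos a (k-1) n (by omega) ha).ne'
    have hphiagree : phi b₀ (k-1) = phi a (k-1) :=
      phi_congr a b₀ (k-1) (fun i h1 h2 => by rw [hb₀def, aRot1]; simp only [if_neg (show i ≠ k from by omega)])
    have hpsiagree : psi b₀ (k-1) = psi a (k-1) := by
      rw [psi_eq_revc, psi_eq_revc, hphiagree]
    rw [phin, revc_C_mul _ hkapne, Complex.conj_ofReal, eval_mul, eval_C, ← psi_eq_revc,
      hpsiagree]
  have hpert : (phinPert a b₀ k).eval z = ((kap a k : ℝ):ℂ) * (phi b₀ k).eval z := by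
    rw [phinPert, eval_mul, eval_C]
  have hzpow : z ^ ((1:ℤ) - k) = (z^(k-1))⁻¹ := by
    rw [show (1:ℤ) - k = -(((k-1:ℕ) : ℤ)) from by push_cast [Nat.cast_sub hk1]; ring,
      zpow_neg, zpow_natCast]
  have hp2 : (z^(n-1))⁻¹ * z^(n-k) = (z^(k-1))⁻¹ := by
    rw [show n-1 = (n-k)+(k-1) from by omega, pow_add]
    have h1 : (z:ℂ)^(n-k) ≠ 0 := pow_ne_zero _ hz
    have h2 : (z:ℂ)^(k-1) ≠ 0 := pow_ne_zero _ hz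
    field_simp
  have hA : ((esgn a n : ℝ):ℂ) * ((kap a n : ℝ):ℂ)^2
      * (∏ l ∈ Finset.Icc (k+1) n, (1 - b₀ l * conj (b₀ l)))
      = ((esgn a k : ℝ):ℂ) * ((kap a k : ℝ):ℂ)^2 := by
    rw [hprod k]
    exact_mod_cast congrArg (fun x : ℝ => (x:ℂ)) (prodA a n k hkn ha)
  have hB : ((esgn a k : ℝ):ℂ) * ((kap a k : ℝ):ℂ)^2 * ((1 - ‖a k‖^2 : ℝ):ℂ)
      = ((esgn a (k-1) : ℝ):ℂ) * ((kap a (k-1) : ℝ):ℂ)^2 := by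
    have h := prodA a k (k-1) (by omega) (fun l h1 h2 => ha l h1 (h2.trans hkn))
    rw [show Finset.Icc (k-1+1) k = {k} from by
        rw [show k-1+1 = k from by omega, Finset.Icc_self],
      Finset.prod_singleton] at h
    exact_mod_cast congrArg (fun x : ℝ => (x:ℂ)) h
  have hdk := hd k
  rw [hker, hSrel, hrevphin, hpert, hzpow]
  linear_combination
    (-Complex.I * (z^(n-1))⁻¹ * z^(n-k)
      * (conj (b₀ k) * ((phi b₀ k).eval z)^2
        + (1 - b₀ k * conj (b₀ k)) * b₀ k * ((psi b₀ (k-1)).eval z)^2)) * hA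
    + (-Complex.I * ((esgn a k : ℝ):ℂ) * ((kap a k : ℝ):ℂ)^2
      * (conj (b₀ k) * ((phi b₀ k).eval z)^2
        + (1 - b₀ k * conj (b₀ k)) * b₀ k * ((psi b₀ (k-1)).eval z)^2)) * hp2
    + (-Complex.I * (z^(k-1))⁻¹ * b₀ k * ((psi b₀ (k-1)).eval z)^2
      * ((esgn a k : ℝ):ℂ) * ((kap a k : ℝ):ℂ)^2) * hdk
    + (-Complex.I * (z^(k-1))⁻¹ * b₀ k * ((psi b₀ (k-1)).eval z)^2) * hB
    + (-((esgn a n : ℝ):ℂ) * ((kap a n : ℝ):ℂ)^2 * (z^(n-1))⁻¹) * hN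
end
end
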